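/- Let α ≤ 1 and 0 ≤ s < α - 1/2, and let (gₙ)ₙ∈ℤ be i.i.d. standard complex Gaussians. Then for any constants C > 0 and B > 0, the random variable 𝟙{(Σₙ |gₙ|²/⟨n⟩^{2α})^{1/2} < B} · exp(C ‖Σₙ gₙ⟨n⟩^{-α} e^{inx}‖⁴_{H^s(𝕋)}) is integrable. -/

import Mathlib

open MeasureTheory ProbabilityTheory

/-- The law of a standard complex Gaussian random variable. -/
noncomputable def stdComplexGaussian : Measure ℂ :=
  ((gaussianReal 0 1).prod (gaussianReal 0 1)).map
    (fun p : ℝ × ℝ => Complex.equivRealProd.symm p)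

section EIHAux

open Real Filter
open scoped ENNReal NNReal

lemma EIH_gauss_pdf_rw (c : ℝ) :
    (fun x : ℝ => rexp (c * x^2) * (gaussianPDF 0 1 x).toReal)
      = fun x : ℝ => (√(2*π))⁻¹ * rexp (-(1/2 - c) * x^2) := by
  funext x
  rw [gaussianPDF, ENNReal.toReal_ofReal (gaussianPDFReal_nonneg _ _ _), gaussianPDFReal]
  have h1 : rexp (c * x^2) * ((√(2*π*(1:ℝ≥0)))⁻¹ * rexp (-(x-0)^2/(2*(1:ℝ≥0))))
      = (√(2*π))⁻¹ * (rexp (c * x^2) * rexp (-(x-0)^2/(2*(1:ℝ≥0)))) := by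
    push_cast; ring_nf
  rw [h1, ← Real.exp_add]
  congr 1
  push_cast; ring

lemma EIH_integrable_exp_sq_gauss {c : ℝ} (hc : c < 1/2) :
    Integrable (fun x : ℝ => rexp (c * x^2)) (gaussianReal 0 1) := by
  rw [gaussianReal_of_var_ne_zero _ one_ne_zero,
    integrable_withDensity_iff (measurable_gaussianPDF _ _)
      (Filter.Eventually.of_forall fun x => ENNReal.ofReal_lt_top)]
  rw [EIH_gauss_pdf_rw]
  exact (integrable_exp_neg_mul_sq (by linarith)).const_mul _

lemma EIH_integral_exp_sq_gauss (c : ℝ) :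
    ∫ x, rexp (c * x^2) ∂(gaussianReal 0 1) = (√(2*π))⁻¹ * √(π / (1/2 - c)) := by
  rw [gaussianReal_of_var_ne_zero _ one_ne_zero]
  have h0 : (gaussianPDF 0 1)
      = fun x => ((fun y => (gaussianPDFReal 0 1 y).toNNReal) x : ℝ≥0∞) := rfl
  rw [h0, integral_withDensity_eq_integral_smul
    ((measurable_gaussianPDFReal 0 1).real_toNNReal)]
  have h1 : (fun x : ℝ => (gaussianPDFReal 0 1 x).toNNReal • rexp (c * x^2))
      = fun x : ℝ => (√(2*π))⁻¹ * rexp (-(1/2 - c) * x^2) := by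
    funext x
    rw [NNReal.smul_def, Real.coe_toNNReal _ (gaussianPDFReal_nonneg _ _ _), smul_eq_mul,
      mul_comm]
    have h2 := congrFun (EIH_gauss_pdf_rw c) x
    rw [gaussianPDF, ENNReal.toReal_ofReal (gaussianPDFReal_nonneg _ _ _)] at h2
    exact h2
  rw [h1, integral_const_mul, integral_gaussian]

lemma EIH_std_map_eq : (fun p : ℝ × ℝ => Complex.equivRealProd.symm p)
    = ⇑(Complex.measurableEquivRealProd.symm) := by
  funext p
  apply Complex.ext <;> simp [Complex.measurableEquivRealProd_symm_apply]

lemma EIH_norm_sq_symm (p : ℝ × ℝ) :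
    ‖(Complex.measurableEquivRealProd.symm p : ℂ)‖^2 = p.1^2 + p.2^2 := by
  rw [Complex.measurableEquivRealProd_symm_apply, Complex.sq_norm,
    Complex.normSq_mk]
  ring

lemma EIH_integrable_exp_sq_stdC {c : ℝ} (hc : c < 1/2) :
    Integrable (fun z : ℂ => rexp (c * ‖z‖^2)) stdComplexGaussian := by
  rw [stdComplexGaussian, EIH_std_map_eq, integrable_map_equiv]
  have : ((fun z : ℂ => rexp (c * ‖z‖^2)) ∘ ⇑(Complex.measurableEquivRealProd.symm))
      = fun p : ℝ × ℝ => rexp (c * p.1^2) * rexp (c * p.2^2) := by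
    funext p
    simp only [Function.comp_apply, EIH_norm_sq_symm, ← Real.exp_add]
    congr 1; ring
  rw [this]
  exact (EIH_integrable_exp_sq_gauss hc).mul_prod (EIH_integrable_exp_sq_gauss hc)

lemma EIH_integral_exp_sq_stdC (c : ℝ) :
    ∫ z, rexp (c * ‖z‖^2) ∂stdComplexGaussian
      = (∫ x, rexp (c * x^2) ∂(gaussianReal 0 1)) * ∫ x, rexp (c * x^2) ∂(gaussianReal 0 1) := by
  rw [stdComplexGaussian, EIH_std_map_eq, integral_map_equiv]
  have : (fun p : ℝ × ℝ => rexp (c * ‖(Complex.measurableEquivRealProd.symm p : ℂ)‖^2))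
      = fun p : ℝ × ℝ => rexp (c * p.1^2) * rexp (c * p.2^2) := by
    funext p
    rw [EIH_norm_sq_symm, ← Real.exp_add]
    congr 1; ring
  rw [this]
  exact integral_prod_mul (fun x : ℝ => rexp (c * x^2)) (fun x : ℝ => rexp (c * x^2))

lemma EIH_sq_int_le {c : ℝ} (hc0 : 0 ≤ c) (hc : c ≤ 1/4) :
    ((√(2*π))⁻¹ * √(π / (1/2 - c))) * ((√(2*π))⁻¹ * √(π / (1/2 - c))) ≤ rexp (4*c) := by
  have hπ : 0 < π := Real.pi_pos
  have hb : 0 < 1/2 - c := by linarith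
  have e1 : √(2*π) * √(2*π) = 2*π := Real.mul_self_sqrt (by positivity)
  have e2 : √(π / (1/2 - c)) * √(π / (1/2 - c)) = π / (1/2 - c) :=
    Real.mul_self_sqrt (by positivity)
  have h1 : ((√(2*π))⁻¹ * √(π / (1/2 - c))) * ((√(2*π))⁻¹ * √(π / (1/2 - c)))
      = (√(2*π) * √(2*π))⁻¹ * (√(π / (1/2 - c)) * √(π / (1/2 - c))) := by
    rw [mul_inv]; ring
  rw [h1, e1, e2]
  have hπne : (2*π - 4*c*π) ≠ 0 := by nlinarith
  have h2 : (1 - 2*c) * ((2*π)⁻¹ * (π / (1/2 - c))) = 1 := by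
    rw [show (1 - 2*c) = 2*(1/2-c) by ring]
    field_simp
    exact div_self (by linarith : (0:ℝ) < 1 - 2*c).ne'
  rw [show (2*π)⁻¹ * (π / (1/2 - c)) = (1-2*c)⁻¹ from
    eq_inv_of_mul_eq_one_left (by linear_combination h2)]
  have h3 : (1:ℝ) + 4*c ≤ rexp (4*c) := by
    have := Real.add_one_le_exp (4*c); linarith
  have h4 : (1:ℝ) ≤ (1 - 2*c) * rexp (4*c) := by
    have : (1 - 2*c) * (1 + 4*c) ≤ (1 - 2*c) * rexp (4*c) :=
      mul_le_mul_of_nonneg_left h3 (by linarith)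
    nlinarith
  rw [inv_le_iff_one_le_mul₀ (by linarith)]
  linarith [h4]

lemma EIH_exp_moment {Ω : Type*} [MeasurableSpace Ω] {P : Measure Ω} {g : Ω → ℂ}
    (hm : Measurable g) (hd : Measure.map g P = stdComplexGaussian)
    {c : ℝ} (hc0 : 0 ≤ c) (hc : c ≤ 1/4) :
    Integrable (fun ω => rexp (c * ‖g ω‖^2)) P ∧
      (∫ ω, rexp (c * ‖g ω‖^2) ∂P) ≤ rexp (4*c) := by
  have hcont : Continuous (fun z : ℂ => rexp (c * ‖z‖^2)) :=
    Real.continuous_exp.comp (continuous_const.mul ((continuous_norm).pow 2))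
  have hφm : AEStronglyMeasurable (fun z : ℂ => rexp (c * ‖z‖^2)) (Measure.map g P) :=
    hcont.aestronglyMeasurable
  have hint : Integrable (fun z : ℂ => rexp (c * ‖z‖^2)) (Measure.map g P) := by
    rw [hd]; exact EIH_integrable_exp_sq_stdC (by linarith)
  constructor
  · exact (integrable_map_measure hφm hm.aemeasurable).mp hint
  · have h1 : ∫ ω, rexp (c * ‖g ω‖^2) ∂P
        = ∫ z, rexp (c * ‖z‖^2) ∂(Measure.map g P) :=
      (integral_map hm.aemeasurable hφm).symm
    rw [h1, hd, EIH_integral_exp_sq_stdC c, EIH_integral_exp_sq_gauss c]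
    exact EIH_sq_int_le hc0 hc

lemma EIH_meas_tsum {Ω : Type*} [MeasurableSpace Ω] {f : ℤ → Ω → ℝ}
    (hm : ∀ n, Measurable (f n)) (h0 : ∀ n ω, 0 ≤ f n ω) :
    Measurable (fun ω => ∑' n, f n ω) := by
  have key : (fun ω => ∑' n, f n ω)
      = fun ω => (∑' n, ENNReal.ofReal (f n ω)).toReal := by
    funext ω
    rw [ENNReal.tsum_toReal_eq (fun n => ENNReal.ofReal_ne_top)]
    exact tsum_congr fun n => (ENNReal.toReal_ofReal (h0 n ω)).symm
  rw [key]
  exact (Measurable.ennreal_tsum fun n => (hm n).ennreal_ofReal).ennreal_toReal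

lemma EIH_lam_summable {β : ℝ} (hβ : β < -(1/2)) :
    Summable (fun n : ℤ => (1+(n:ℝ)^2) ^ β) := by
  have hβ0 : β ≤ 0 := by linarith
  have hnat : Summable (fun n : ℕ => (1+(n:ℝ)^2) ^ β) := by
    rw [← summable_nat_add_iff 1]
    have hbase : Summable (fun n : ℕ => ((n:ℝ)+1) ^ (2*β)) := by
      have := (summable_nat_add_iff (f := fun n : ℕ => (n:ℝ) ^ (2*β)) 1).mpr
        (Real.summable_nat_rpow.mpr (by linarith))
      simpa [Nat.cast_add] using this
    apply Summable.of_nonneg_of_le (fun n => Real.rpow_nonneg (by positivity) _) _ hbase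
    intro n
    have hcast : ((n+1:ℕ):ℝ) = (n:ℝ)+1 := by push_cast; ring
    rw [hcast]
    calc (1+((n:ℝ)+1)^2) ^ β ≤ (((n:ℝ)+1)^2) ^ β :=
          Real.rpow_le_rpow_of_nonpos (by positivity) (by nlinarith) hβ0
      _ = ((n:ℝ)+1) ^ (2*β) := by
          rw [← Real.rpow_natCast ((n:ℝ)+1) 2, ← Real.rpow_mul (by positivity)]
          norm_num
  apply Summable.of_nat_of_neg
  · simpa using hnat
  · have : (fun n : ℕ => (1+((-(n:ℤ)):ℝ)^2) ^ β) = fun n : ℕ => (1+(n:ℝ)^2) ^ β := by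
      funext n; push_cast; ring_nf
    simpa [this] using hnat


lemma EIH_chernoff {Ω : Type*} [MeasurableSpace Ω] {P : Measure Ω} [IsProbabilityMeasure P]
    {g : ℤ → Ω → ℂ} (hmeas : ∀ n, Measurable (g n))
    (hdist : ∀ n, Measure.map (g n) P = stdComplexGaussian)
    (hindep : iIndepFun g P)
    (lam : ℤ → ℝ) (hlam : ∀ n, 0 < lam n)
    (D : Finset ℤ) (t a : ℝ) (ht : 0 ≤ t) (hta : ∀ n ∈ D, t * lam n ≤ 1/4) :
    P {ω | a ≤ ∑ n ∈ D, lam n * ‖g n ω‖^2}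
      ≤ ENNReal.ofReal (rexp (-t*a) * rexp (4*t*(∑ n ∈ D, lam n))) := by
  classical
  set Y : ℤ → Ω → ℝ := fun n ω => lam n * ‖g n ω‖^2 with hY
  have hYmeas : ∀ n, Measurable (Y n) := fun n =>
    ((hmeas n).norm.pow_const 2).const_mul _
  have hYindep : iIndepFun Y P :=
    hindep.comp (fun n (z : ℂ) => lam n * ‖z‖^2)
      (fun n => (measurable_norm.pow_const 2).const_mul _)
  have hrw : ∀ n, (fun ω => rexp (t * Y n ω))
      = fun ω => rexp ((t * lam n) * ‖g n ω‖^2) := by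
    intro n; funext ω; rw [hY]; ring_nf
  have hint : ∀ n ∈ D, Integrable (fun ω => rexp (t * Y n ω)) P := by
    intro n hn
    rw [hrw n]
    exact (EIH_exp_moment (hmeas n) (hdist n)
      (mul_nonneg ht (hlam n).le) (hta n hn)).1
  have hintS : Integrable (fun ω => rexp (t * (∑ n ∈ D, Y n) ω)) P :=
    hYindep.integrable_exp_mul_sum hYmeas hint
  have hmgf : mgf (∑ n ∈ D, Y n) P t ≤ rexp (4*t*(∑ n ∈ D, lam n)) := by
    rw [hYindep.mgf_sum hYmeas D]
    calc ∏ n ∈ D, mgf (Y n) P t ≤ ∏ n ∈ D, rexp (4*(t * lam n)) := by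
          apply Finset.prod_le_prod (fun n _ => mgf_nonneg)
          intro n hn
          have h1 : mgf (Y n) P t = ∫ ω, rexp ((t * lam n) * ‖g n ω‖^2) ∂P := by
            rw [mgf, ← hrw n]
          rw [h1]
          exact (EIH_exp_moment (hmeas n) (hdist n)
            (mul_nonneg ht (hlam n).le) (hta n hn)).2
      _ = rexp (∑ n ∈ D, 4*(t*lam n)) := (Real.exp_sum _ _).symm
      _ = rexp (4*t*(∑ n ∈ D, lam n)) := by
          congr 1
          rw [Finset.mul_sum]
          exact Finset.sum_congr rfl fun n _ => by ring
  have hset : {ω : Ω | a ≤ ∑ n ∈ D, Y n ω} = {ω : Ω | a ≤ (∑ n ∈ D, Y n) ω} := by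
    ext ω; simp [Finset.sum_apply]
  have hch := measure_ge_le_exp_mul_mgf (X := ∑ n ∈ D, Y n) (μ := P) a ht hintS
  rw [hset]
  refine (ENNReal.le_ofReal_iff_toReal_le (measure_ne_top _ _) (by positivity)).mpr ?_
  exact hch.trans (mul_le_mul_of_nonneg_left hmgf (Real.exp_nonneg _))


lemma EIH_tail {Ω : Type*} [MeasurableSpace Ω] {P : Measure Ω} [IsProbabilityMeasure P]
    {g : ℤ → Ω → ℂ} (hmeas : ∀ n, Measurable (g n))
    (hdist : ∀ n, Measure.map (g n) P = stdComplexGaussian)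
    (hindep : iIndepFun g P)
    {α s B : ℝ} (hs0 : 0 ≤ s) (hs : s < α - 1/2) (hB : 0 < B) (N : ℕ) :
    P ({ω | (∑' n : ℤ, ‖g n ω‖^2 / (1 + (n : ℝ)^2) ^ α) < B^2} ∩
       {ω | 2*B^2*(1+(N:ℝ)^2)^s
          ≤ ∑' n : ℤ, (1 + (n:ℝ)^2)^s * ‖g n ω‖^2 / (1 + (n:ℝ)^2)^α})
      ≤ ENNReal.ofReal
        (rexp ((∑' n : ℤ, (1+(n:ℝ)^2)^(s-α)) * (1+(N:ℝ)^2)^(α-s)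
          - (B^2/8) * (1+(N:ℝ)^2)^α)) := by
  classical
  have hw : ∀ n : ℤ, (0:ℝ) < 1+(n:ℝ)^2 := fun n => by positivity
  have hw1 : ∀ n : ℤ, (1:ℝ) ≤ 1+(n:ℝ)^2 := fun n => by nlinarith [sq_nonneg ((n:ℝ))]
  have hwN : (0:ℝ) < 1+(N:ℝ)^2 := by positivity
  set lam : ℤ → ℝ := fun n => (1+(n:ℝ)^2)^(s-α) with hlam_def
  have hlam_pos : ∀ n, 0 < lam n := fun n => Real.rpow_pos_of_pos (hw n) _
  have hlam_sum : Summable lam := EIH_lam_summable (by linarith)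
  set Λ : ℝ := ∑' n : ℤ, lam n with hΛ_def
  set u : ℝ := (1+(N:ℝ)^2)^(α-s)/4 with hu_def
  have hu0 : 0 ≤ u := by rw [hu_def]; positivity
  set a : ℝ := B^2*(1+(N:ℝ)^2)^s with ha_def
  have ha0 : 0 < a := by rw [ha_def]; positivity
  have hSterm_eq : ∀ (n : ℤ) (ω : Ω),
      (1+(n:ℝ)^2)^s * ‖g n ω‖^2 / (1+(n:ℝ)^2)^α = lam n * ‖g n ω‖^2 := by
    intro n ω
    simp only [hlam_def]
    rw [Real.rpow_sub (hw n)]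
    ring
  set box : ℕ → Finset ℤ := fun K => Finset.Icc (-(K:ℤ)) K with hbox_def
  have hbox_mono : Monotone box := fun K K' h =>
    Finset.Icc_subset_Icc (by exact_mod_cast neg_le_neg (Int.ofNat_le.mpr h))
      (by exact_mod_cast Int.ofNat_le.mpr h)
  have hbox_cover : ∀ m : ℤ, ∃ K : ℕ, m ∈ box K := by
    intro m
    refine ⟨m.natAbs, ?_⟩
    rw [hbox_def]
    simp only [Finset.mem_Icc]
    omega
  set A : ℕ → Set Ω :=
    fun K => {ω | a/2 ≤ ∑ n ∈ (box K \ box N), lam n * ‖g n ω‖^2} with hA_def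
  -- inclusion
  have hsubset : ({ω | (∑' n : ℤ, ‖g n ω‖^2 / (1 + (n : ℝ)^2) ^ α) < B^2} ∩
       {ω | 2*B^2*(1+(N:ℝ)^2)^s
          ≤ ∑' n : ℤ, (1 + (n:ℝ)^2)^s * ‖g n ω‖^2 / (1 + (n:ℝ)^2)^α})
      ⊆ ⋃ K : ℕ, A K := by
    rintro ω ⟨hL, hS⟩
    simp only [Set.mem_setOf_eq] at hL hS
    have hS2a : 2*a ≤ ∑' n : ℤ, (1 + (n:ℝ)^2)^s * ‖g n ω‖^2 / (1 + (n:ℝ)^2)^α := by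
      rw [ha_def]; linarith [hS]
    have hSsum : Summable (fun n : ℤ =>
        (1 + (n:ℝ)^2)^s * ‖g n ω‖^2 / (1 + (n:ℝ)^2)^α) := by
      by_contra hns
      rw [tsum_eq_zero_of_not_summable hns] at hS2a
      linarith
    have hSsum' : Summable (fun n : ℤ => lam n * ‖g n ω‖^2) :=
      (summable_congr (fun n => hSterm_eq n ω)).mp hSsum
    have hSval : (∑' n : ℤ, (1 + (n:ℝ)^2)^s * ‖g n ω‖^2 / (1 + (n:ℝ)^2)^α)
        = ∑' n : ℤ, lam n * ‖g n ω‖^2 := tsum_congr fun n => hSterm_eq n ω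
    have hterm_le : ∀ n : ℤ, ‖g n ω‖^2 / (1+(n:ℝ)^2)^α ≤ lam n * ‖g n ω‖^2 := by
      intro n
      rw [← hSterm_eq n ω]
      have h1 : (1:ℝ) ≤ (1+(n:ℝ)^2)^s := by
        have h1' : (1+(n:ℝ)^2)^(0:ℝ) ≤ (1+(n:ℝ)^2)^s :=
          Real.rpow_le_rpow_of_exponent_le (hw1 n) hs0
        rwa [Real.rpow_zero] at h1'
      apply (div_le_div_iff_of_pos_right (Real.rpow_pos_of_pos (hw n) α)).mpr
      nlinarith [sq_nonneg ‖g n ω‖]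
    have hLsum : Summable (fun n : ℤ => ‖g n ω‖^2 / (1+(n:ℝ)^2)^α) :=
      Summable.of_nonneg_of_le (fun n => by positivity) hterm_le hSsum'
    have htend : Filter.Tendsto (fun K => ∑ n ∈ box K, lam n * ‖g n ω‖^2)
        Filter.atTop (nhds (∑' n : ℤ, lam n * ‖g n ω‖^2)) :=
      hSsum'.hasSum.comp (Filter.tendsto_atTop_finset_of_monotone hbox_mono hbox_cover)
    have h32 : (3/2)*a < ∑' n : ℤ, lam n * ‖g n ω‖^2 := by
      rw [← hSval]; linarith
    obtain ⟨K, hKprop⟩ := ((htend.eventually_const_lt h32).and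
      (Filter.eventually_ge_atTop N)).exists
    obtain ⟨hK32, hKN⟩ := hKprop
    have hlow : ∑ n ∈ box N, lam n * ‖g n ω‖^2 < a := by
      have hstep : ∀ n ∈ box N, lam n * ‖g n ω‖^2
          ≤ (1+(N:ℝ)^2)^s * (‖g n ω‖^2 / (1+(n:ℝ)^2)^α) := by
        intro n hn
        rw [← hSterm_eq n ω, mul_div_assoc]
        apply mul_le_mul_of_nonneg_right ?_ (by positivity)
        apply Real.rpow_le_rpow (hw n).le ?_ hs0
        rw [hbox_def] at hn
        simp only [Finset.mem_Icc] at hn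
        have : (n:ℝ)^2 ≤ (N:ℝ)^2 := by
          have h1 : ((-(N:ℤ)):ℝ) ≤ (n:ℝ) := by exact_mod_cast hn.1
          have h2 : (n:ℝ) ≤ ((N:ℤ):ℝ) := by exact_mod_cast hn.2
          push_cast at h1 h2
          nlinarith
        linarith
      calc ∑ n ∈ box N, lam n * ‖g n ω‖^2
          ≤ ∑ n ∈ box N, (1+(N:ℝ)^2)^s * (‖g n ω‖^2 / (1+(n:ℝ)^2)^α) :=
            Finset.sum_le_sum hstep
        _ = (1+(N:ℝ)^2)^s * ∑ n ∈ box N, ‖g n ω‖^2 / (1+(n:ℝ)^2)^α := by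
            rw [Finset.mul_sum]
        _ ≤ (1+(N:ℝ)^2)^s * ∑' n : ℤ, ‖g n ω‖^2 / (1+(n:ℝ)^2)^α := by
            apply mul_le_mul_of_nonneg_left ?_ (by positivity)
            exact Summable.sum_le_tsum (box N) (fun n _ => by positivity) hLsum
        _ < (1+(N:ℝ)^2)^s * B^2 := by
            apply mul_lt_mul_of_pos_left hL (by positivity)
        _ = a := by rw [ha_def]; ring
    refine Set.mem_iUnion.mpr ⟨K, ?_⟩
    rw [hA_def]
    simp only [Set.mem_setOf_eq]
    rw [Finset.sum_sdiff_eq_sub (hbox_mono hKN)]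
    linarith
  -- measure bound
  have hAmono : Monotone A := by
    intro K K' hKK'
    intro ω hω
    simp only [hA_def, Set.mem_setOf_eq] at hω ⊢
    refine hω.trans (Finset.sum_le_sum_of_subset_of_nonneg ?_ ?_)
    · exact Finset.sdiff_subset_sdiff (hbox_mono hKK') (le_refl _)
    · intro n _ _
      exact mul_nonneg (hlam_pos n).le (by positivity)
  refine (measure_mono hsubset).trans ?_
  rw [hAmono.directed_le.measure_iUnion]
  apply iSup_le
  intro K
  have hta : ∀ n ∈ box K \ box N, u * lam n ≤ 1/4 := by
    intro n hn
    have hnN : n ∉ box N := (Finset.mem_sdiff.mp hn).2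
    rw [hbox_def] at hnN
    simp only [Finset.mem_Icc, not_and_or, not_le] at hnN
    have hsq : (N:ℝ)^2 ≤ (n:ℝ)^2 := by
      rcases hnN with h | h
      · have : (n:ℝ) < -(N:ℝ) := by exact_mod_cast h
        nlinarith
      · have : (N:ℝ) < (n:ℝ) := by exact_mod_cast h
        nlinarith
    have hlamle : lam n ≤ (1+(N:ℝ)^2)^(s-α) := by
      rw [hlam_def]
      exact Real.rpow_le_rpow_of_nonpos hwN (by linarith) (by linarith)
    have hprod : (1+(N:ℝ)^2)^(α-s) * (1+(N:ℝ)^2)^(s-α) = 1 := by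
      rw [← Real.rpow_add hwN]
      norm_num
    calc u * lam n ≤ u * (1+(N:ℝ)^2)^(s-α) :=
          mul_le_mul_of_nonneg_left hlamle hu0
      _ = 1/4 := by
          rw [hu_def, div_mul_eq_mul_div, hprod]
  refine (EIH_chernoff hmeas hdist hindep lam hlam_pos (box K \ box N) u (a/2)
    hu0 hta).trans ?_
  rw [← Real.exp_add]
  apply ENNReal.ofReal_le_ofReal
  apply Real.exp_le_exp.mpr
  have hprod2 : (1+(N:ℝ)^2)^(α-s) * (1+(N:ℝ)^2)^s = (1+(N:ℝ)^2)^α := by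
    rw [← Real.rpow_add hwN]
    ring_nf
  have h1 : -u*(a/2) = -(B^2/8) * (1+(N:ℝ)^2)^α := by
    rw [hu_def, ha_def]
    linear_combination (-(B^2/8)) * hprod2
  have h2 : 4*u*(∑ n ∈ box K \ box N, lam n) ≤ Λ * (1+(N:ℝ)^2)^(α-s) := by
    have hDle : ∑ n ∈ box K \ box N, lam n ≤ Λ :=
      Summable.sum_le_tsum _ (fun n _ => (hlam_pos n).le) hlam_sum
    have h4u : 4*u = (1+(N:ℝ)^2)^(α-s) := by rw [hu_def]; ring
    rw [h4u]
    rw [mul_comm Λ _]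
    exact mul_le_mul_of_nonneg_left hDle (by positivity)
  linarith


lemma EIH_summable {α s C B Λ : ℝ} (hα : α ≤ 1) (hs0 : 0 < s) (hs : s < α - 1/2)
    (hC : 0 < C) (hB : 0 < B) :
    Summable (fun N : ℕ => rexp (C * (2*B^2*(1+((N+1:ℕ):ℝ)^2)^s)^2 +
      (Λ*(1+(N:ℝ)^2)^(α-s) - B^2/8*(1+(N:ℝ)^2)^α))) := by
  have hα2 : 1/2 < α := by linarith
  have hw : ∀ N : ℕ, (0:ℝ) < 1+(N:ℝ)^2 := fun N => by positivity
  set E : ℕ → ℝ := fun N => C * (2*B^2*(1+((N+1:ℕ):ℝ)^2)^s)^2 +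
      (Λ*(1+(N:ℝ)^2)^(α-s) - B^2/8*(1+(N:ℝ)^2)^α) with hE_def
  set Q : ℕ → ℝ := fun N =>
      C*4*B^4*((1+((N:ℝ)+1)^2)^(2*s) * (1+(N:ℝ)^2)^(-α)) + Λ*(1+(N:ℝ)^2)^(-s)
        + (N:ℝ)*(1+(N:ℝ)^2)^(-α) - B^2/8 with hQ_def
  have key : ∀ N : ℕ, E N + N = (1+(N:ℝ)^2)^α * Q N := by
    intro N
    have hcast : ((N+1:ℕ):ℝ) = (N:ℝ)+1 := by push_cast; ring
    have e1 : (1+(N:ℝ)^2)^α * (1+(N:ℝ)^2)^(-α) = 1 := by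
      rw [← Real.rpow_add (hw N)]; simp
    have e2 : (1+(N:ℝ)^2)^α * (1+(N:ℝ)^2)^(-s) = (1+(N:ℝ)^2)^(α-s) := by
      rw [← Real.rpow_add (hw N)]; ring_nf
    have e3 : ((1+((N:ℝ)+1)^2)^s)^2 = (1+((N:ℝ)+1)^2)^(2*s) := by
      rw [← Real.rpow_natCast ((1+((N:ℝ)+1)^2)^s) 2, ← Real.rpow_mul (by positivity)]
      norm_num [mul_comm]
    rw [hE_def, hQ_def]
    simp only [hcast]
    linear_combination C*4*B^4*e3 - Λ*e2 -
      (C*4*B^4*(1+((N:ℝ)+1)^2)^(2*s) + (N:ℝ))*e1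
  have ht1 : Filter.Tendsto (fun N : ℕ => 1+(N:ℝ)^2) Filter.atTop Filter.atTop :=
    Filter.tendsto_atTop_add_const_left _ 1
      ((tendsto_pow_atTop two_ne_zero).comp tendsto_natCast_atTop_atTop)
  have hT1 : Filter.Tendsto (fun N : ℕ => (1+((N:ℝ)+1)^2)^(2*s) * (1+(N:ℝ)^2)^(-α))
      Filter.atTop (nhds 0) := by
    apply squeeze_zero' (g := fun N : ℕ => 4^(2*s) * (1+(N:ℝ)^2)^(2*s-α))
      (Filter.Eventually.of_forall fun N => by positivity)
      (Filter.Eventually.of_forall ?_) ?_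
    · intro N
      have h4 : 1+((N:ℝ)+1)^2 ≤ 4*(1+(N:ℝ)^2) := by
        nlinarith [sq_nonneg ((N:ℝ)-1), Nat.cast_nonneg (α := ℝ) N]
      calc (1+((N:ℝ)+1)^2)^(2*s) * (1+(N:ℝ)^2)^(-α)
          ≤ (4*(1+(N:ℝ)^2))^(2*s) * (1+(N:ℝ)^2)^(-α) := by
            apply mul_le_mul_of_nonneg_right ?_ (by positivity)
            exact Real.rpow_le_rpow (by positivity) h4 (by positivity)
        _ = 4^(2*s) * ((1+(N:ℝ)^2)^(2*s) * (1+(N:ℝ)^2)^(-α)) := by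
            rw [Real.mul_rpow (by norm_num) (hw N).le]; ring
        _ = 4^(2*s) * (1+(N:ℝ)^2)^(2*s-α) := by
            rw [← Real.rpow_add (hw N)]; ring_nf
    · have hbase : Filter.Tendsto (fun x : ℝ => x^(-(α-2*s))) Filter.atTop (nhds 0) :=
        tendsto_rpow_neg_atTop (by linarith)
      have h2 : Filter.Tendsto (fun N : ℕ => (1+(N:ℝ)^2)^(2*s-α)) Filter.atTop (nhds 0) := by
        have h3 := hbase.comp ht1
        have hexp : -(α-2*s) = 2*s-α := by ring
        simpa [Function.comp_def, hexp] using h3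
      simpa using h2.const_mul ((4:ℝ)^(2*s))
  have hT2 : Filter.Tendsto (fun N : ℕ => Λ*(1+(N:ℝ)^2)^(-s)) Filter.atTop (nhds 0) := by
    have h2 := (tendsto_rpow_neg_atTop hs0).comp ht1
    simpa [Function.comp] using h2.const_mul Λ
  have hT3 : Filter.Tendsto (fun N : ℕ => (N:ℝ)*(1+(N:ℝ)^2)^(-α)) Filter.atTop (nhds 0) := by
    apply squeeze_zero' (g := fun N : ℕ => (N:ℝ)^(-(2*α-1)))
      (Filter.Eventually.of_forall fun N => by positivity)
      ?_ ?_
    · filter_upwards [Filter.eventually_ge_atTop 1] with N hN1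
      have hN1' : (1:ℝ) ≤ (N:ℝ) := by exact_mod_cast hN1
      have hNpos : (0:ℝ) < (N:ℝ) := by linarith
      have hb1 : (1+(N:ℝ)^2)^(-α) ≤ ((N:ℝ)^2)^(-α) :=
        Real.rpow_le_rpow_of_nonpos (by positivity) (by nlinarith) (by linarith)
      have hb2 : ((N:ℝ)^2)^(-α) = (N:ℝ)^(2*(-α)) := by
        rw [← Real.rpow_natCast (N:ℝ) 2, ← Real.rpow_mul hNpos.le]
        norm_num
      have hb3 : (N:ℝ)*(N:ℝ)^(2*(-α)) = (N:ℝ)^(1+2*(-α)) := by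
        rw [Real.rpow_add hNpos, Real.rpow_one]
      calc (N:ℝ)*(1+(N:ℝ)^2)^(-α) ≤ (N:ℝ)*((N:ℝ)^2)^(-α) :=
            mul_le_mul_of_nonneg_left hb1 hNpos.le
        _ = (N:ℝ)^(1+2*(-α)) := by rw [hb2, hb3]
        _ = (N:ℝ)^(-(2*α-1)) := by ring_nf
    · have hbase : Filter.Tendsto (fun x : ℝ => x^(-(2*α-1))) Filter.atTop (nhds 0) :=
        tendsto_rpow_neg_atTop (by linarith)
      exact hbase.comp tendsto_natCast_atTop_atTop
  have hQtend : Filter.Tendsto Q Filter.atTop (nhds (-(B^2/8))) := by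
    rw [hQ_def]
    have := (((hT1.const_mul (C*4*B^4)).add hT2).add hT3).sub_const (B^2/8)
    simpa using this
  have hQneg : ∀ᶠ N in Filter.atTop, Q N < 0 :=
    hQtend.eventually_lt_const (by nlinarith)
  have hEev : ∀ᶠ N in Filter.atTop, E N ≤ -(N:ℝ) := by
    filter_upwards [hQneg] with N hQN
    have := key N
    nlinarith [Real.rpow_pos_of_pos (hw N) α, this]
  obtain ⟨K, hK⟩ := Filter.eventually_atTop.mp hEev
  rw [show (fun N : ℕ => rexp (C * (2*B^2*(1+((N+1:ℕ):ℝ)^2)^s)^2 +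
      (Λ*(1+(N:ℝ)^2)^(α-s) - B^2/8*(1+(N:ℝ)^2)^α))) = fun N => rexp (E N) from rfl]
  rw [← summable_nat_add_iff K]
  apply Summable.of_nonneg_of_le (fun _ => Real.exp_nonneg _) (fun n => ?_)
    ((summable_geometric_of_lt_one (Real.exp_nonneg (-1))
      (Real.exp_lt_one_iff.mpr (by norm_num))).mul_left (rexp (-(K:ℝ))))
  have h1 : E (n+K) ≤ -((n+K:ℕ):ℝ) := hK (n+K) (by omega)
  calc rexp (E (n+K)) ≤ rexp (-((n+K:ℕ):ℝ)) := Real.exp_le_exp.mpr h1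
    _ = rexp (-(K:ℝ)) * rexp (-1)^n := by
        rw [← Real.exp_nat_mul, ← Real.exp_add]
        congr 1
        push_cast
        ring

end EIHAux

theorem exp_integrability_Hs {Ω : Type*} [MeasurableSpace Ω]
    (P : Measure Ω) [IsProbabilityMeasure P]
    (g : ℤ → Ω → ℂ) (hmeas : ∀ n, Measurable (g n))
    (hdist : ∀ n, Measure.map (g n) P = stdComplexGaussian)
    (hindep : iIndepFun g P)
    (α s : ℝ) (hα : α ≤ 1) (hs0 : 0 ≤ s) (hs : s < α - 1/2)
    (C B : ℝ) (hC : 0 < C) (hB : 0 < B) :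
    Integrable
      (fun ω => Set.indicator
        {ω | (∑' n : ℤ, ‖g n ω‖^2 / (1 + (n : ℝ)^2) ^ α) < B^2}
        (fun ω => Real.exp (C *
          (∑' n : ℤ, (1 + (n : ℝ)^2) ^ s * ‖g n ω‖^2 / (1 + (n : ℝ)^2) ^ α)^2)) ω)
      P := by
  classical
  have hw : ∀ n : ℤ, (0:ℝ) < 1+(n:ℝ)^2 := fun n => by positivity
  have hLmeas : Measurable (fun ω => ∑' n : ℤ, ‖g n ω‖^2 / (1 + (n:ℝ)^2)^α) :=
    EIH_meas_tsum (fun n => ((hmeas n).norm.pow_const 2).div_const _)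
      (fun n ω => by positivity)
  have hSmeas : Measurable
      (fun ω => ∑' n : ℤ, (1+(n:ℝ)^2)^s * ‖g n ω‖^2 / (1 + (n:ℝ)^2)^α) :=
    EIH_meas_tsum (fun n => (((hmeas n).norm.pow_const 2).const_mul _).div_const _)
      (fun n ω => by positivity)
  set E : Set Ω := {ω | (∑' n : ℤ, ‖g n ω‖^2 / (1 + (n : ℝ)^2) ^ α) < B^2} with hEdef
  set F : Ω → ℝ := fun ω => Real.exp (C *
      (∑' n : ℤ, (1 + (n : ℝ)^2) ^ s * ‖g n ω‖^2 / (1 + (n : ℝ)^2) ^ α)^2) with hFdef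
  set Sf : Ω → ℝ :=
    fun ω => ∑' n : ℤ, (1 + (n : ℝ)^2) ^ s * ‖g n ω‖^2 / (1 + (n : ℝ)^2) ^ α with hSfdef
  have hSfmeas : Measurable Sf := hSmeas
  have hSf0 : ∀ ω, 0 ≤ Sf ω := fun ω => tsum_nonneg (fun n => by positivity)
  have hFω : ∀ ω, F ω = Real.exp (C * (Sf ω)^2) := fun ω => rfl
  have hEmeas : MeasurableSet E := by
    rw [hEdef]
    exact measurableSet_lt hLmeas measurable_const
  have hFmeas : Measurable F := by
    rw [hFdef]
    exact Real.measurable_exp.comp ((hSmeas.pow_const 2).const_mul C)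
  have hfmeas : Measurable (fun ω => E.indicator F ω) := hFmeas.indicator hEmeas
  have hfnonneg : ∀ ω, 0 ≤ E.indicator F ω :=
    fun ω => Set.indicator_nonneg (fun _ _ => Real.exp_nonneg _) ω
  refine ⟨hfmeas.aestronglyMeasurable, ?_⟩
  rw [hasFiniteIntegral_iff_ofReal (Filter.Eventually.of_forall hfnonneg)]
  rcases hs0.eq_or_lt with hseq | hspos
  · -- case s = 0
    have hpt : ∀ ω, ENNReal.ofReal (E.indicator F ω)
        ≤ ENNReal.ofReal (Real.exp (C * B^4)) := by
      intro ω
      apply ENNReal.ofReal_le_ofReal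
      by_cases hω : ω ∈ E
      · rw [Set.indicator_of_mem hω, hFω ω]
        apply Real.exp_le_exp.mpr
        have hSL : Sf ω = ∑' n : ℤ, ‖g n ω‖^2 / (1 + (n:ℝ)^2)^α := by
          rw [hSfdef]
          refine tsum_congr fun n => ?_
          rw [← hseq, Real.rpow_zero, one_mul]
        have hω' : (∑' n : ℤ, ‖g n ω‖^2 / (1 + (n:ℝ)^2)^α) < B^2 := hω
        have hL0 : 0 ≤ ∑' n : ℤ, ‖g n ω‖^2 / (1 + (n:ℝ)^2)^α :=
          tsum_nonneg (fun n => by positivity)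
        have hsq : (Sf ω)^2 ≤ B^4 := by
          rw [hSL]
          nlinarith
        exact mul_le_mul_of_nonneg_left hsq hC.le
      · rw [Set.indicator_of_notMem hω]
        positivity
    calc ∫⁻ ω, ENNReal.ofReal (E.indicator F ω) ∂P
        ≤ ∫⁻ _, ENNReal.ofReal (Real.exp (C * B^4)) ∂P := lintegral_mono hpt
      _ = ENNReal.ofReal (Real.exp (C * B^4)) := by
          rw [lintegral_const, measure_univ, mul_one]
      _ < ⊤ := ENNReal.ofReal_lt_top
  · -- case 0 < s
    set r : ℕ → ℝ := fun N => 2*B^2*(1+(N:ℝ)^2)^s with hrdef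
    set Λ : ℝ := ∑' n : ℤ, (1+(n:ℝ)^2)^(s-α) with hΛdef
    have hr_pos : ∀ N, 0 < r N := by
      intro N; rw [hrdef]; positivity
    have hr_tend : Filter.Tendsto r Filter.atTop Filter.atTop := by
      rw [hrdef]
      apply Filter.Tendsto.const_mul_atTop (by positivity : (0:ℝ) < 2*B^2)
      exact (tendsto_rpow_atTop hspos).comp
        (Filter.tendsto_atTop_add_const_left _ 1
          ((Filter.tendsto_pow_atTop two_ne_zero).comp tendsto_natCast_atTop_atTop))
    have hbound : ∀ ω, ENNReal.ofReal (E.indicator F ω)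
        ≤ ENNReal.ofReal (Real.exp (C * (r 0)^2))
          + ∑' N : ℕ, (E ∩ {ω | r N ≤ Sf ω}).indicator
              (fun _ => ENNReal.ofReal (Real.exp (C * (r (N+1))^2))) ω := by
      intro ω
      by_cases hω : ω ∈ E
      · rw [Set.indicator_of_mem hω, hFω ω]
        by_cases h0 : Sf ω < r 0
        · refine le_trans (ENNReal.ofReal_le_ofReal ?_) le_self_add
          apply Real.exp_le_exp.mpr
          exact mul_le_mul_of_nonneg_left
            (pow_le_pow_left₀ (hSf0 ω) h0.le 2) hC.le
        · push_neg at h0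
          have hex : ∃ K, Sf ω < r K := (hr_tend.eventually_gt_atTop (Sf ω)).exists
          have hMspec : Sf ω < r (Nat.find hex) := Nat.find_spec hex
          have hM0 : Nat.find hex ≠ 0 := by
            intro h
            rw [h] at hMspec
            exact absurd hMspec (not_lt.mpr h0)
          obtain ⟨N, hNM⟩ := Nat.exists_eq_succ_of_ne_zero hM0
          have hup : Sf ω < r (N+1) := by rw [hNM] at hMspec; exact hMspec
          have hlo : r N ≤ Sf ω := not_lt.mp (Nat.find_min hex (by omega))
          calc ENNReal.ofReal (Real.exp (C * (Sf ω)^2))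
              ≤ ENNReal.ofReal (Real.exp (C * (r (N+1))^2)) := by
                apply ENNReal.ofReal_le_ofReal
                apply Real.exp_le_exp.mpr
                exact mul_le_mul_of_nonneg_left
                  (pow_le_pow_left₀ (hSf0 ω) hup.le 2) hC.le
            _ = (E ∩ {ω | r N ≤ Sf ω}).indicator
                  (fun _ => ENNReal.ofReal (Real.exp (C * (r (N+1))^2))) ω :=
                (Set.indicator_of_mem
                  (Set.mem_inter hω (by exact hlo : ω ∈ {ω | r N ≤ Sf ω}))
                  (fun _ => ENNReal.ofReal (Real.exp (C * r (N + 1) ^ 2)))).symm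
            _ ≤ ∑' N' : ℕ, (E ∩ {ω | r N' ≤ Sf ω}).indicator
                  (fun _ => ENNReal.ofReal (Real.exp (C * (r (N'+1))^2))) ω :=
                ENNReal.le_tsum N
            _ ≤ _ := self_le_add_left _ _
      · rw [Set.indicator_of_notMem hω]
        simp
    have hsetmeas : ∀ N : ℕ, MeasurableSet (E ∩ {ω | r N ≤ Sf ω}) :=
      fun N => hEmeas.inter (measurableSet_le measurable_const hSfmeas)
    calc ∫⁻ ω, ENNReal.ofReal (E.indicator F ω) ∂P
        ≤ ∫⁻ ω, (ENNReal.ofReal (Real.exp (C * (r 0)^2))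
            + ∑' N : ℕ, (E ∩ {ω | r N ≤ Sf ω}).indicator
                (fun _ => ENNReal.ofReal (Real.exp (C * (r (N+1))^2))) ω) ∂P :=
          lintegral_mono hbound
      _ = ENNReal.ofReal (Real.exp (C * (r 0)^2))
          + ∑' N : ℕ, ENNReal.ofReal (Real.exp (C * (r (N+1))^2))
              * P (E ∩ {ω | r N ≤ Sf ω}) := by
          rw [lintegral_add_left measurable_const, lintegral_const, measure_univ, mul_one]
          congr 1
          rw [lintegral_tsum (fun N =>
            ((measurable_const.indicator (hsetmeas N)).aemeasurable))]
          exact tsum_congr fun N => lintegral_indicator_const (hsetmeas N) _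
      _ ≤ ENNReal.ofReal (Real.exp (C * (r 0)^2))
          + ∑' N : ℕ, ENNReal.ofReal (Real.exp (C * (r (N+1))^2
              + (Λ*(1+(N:ℝ)^2)^(α-s) - B^2/8*(1+(N:ℝ)^2)^α))) := by
          apply add_le_add_right
          apply ENNReal.tsum_le_tsum
          intro N
          have htail := EIH_tail hmeas hdist hindep hs0 hs hB N
          calc ENNReal.ofReal (Real.exp (C * (r (N+1))^2)) * P (E ∩ {ω | r N ≤ Sf ω})
              ≤ ENNReal.ofReal (Real.exp (C * (r (N+1))^2))
                * ENNReal.ofReal (Real.exp (Λ*(1+(N:ℝ)^2)^(α-s)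
                    - B^2/8*(1+(N:ℝ)^2)^α)) := by
                exact mul_le_mul_right htail _
            _ = ENNReal.ofReal (Real.exp (C * (r (N+1))^2
                  + (Λ*(1+(N:ℝ)^2)^(α-s) - B^2/8*(1+(N:ℝ)^2)^α))) := by
                rw [← ENNReal.ofReal_mul (Real.exp_nonneg _), ← Real.exp_add]
      _ < ⊤ := by
          rw [← ENNReal.ofReal_tsum_of_nonneg (fun N => Real.exp_nonneg _)
            (EIH_summable hα hspos hs hC hB)]
          exact ENNReal.add_lt_top.mpr ⟨ENNReal.ofReal_lt_top, ENNReal.ofReal_lt_top⟩
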